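/- arXiv:1510.01077 — 2 statements merged into one kernel-verified Lean document; each statement's English description precedes it below -/
import Mathlib

section
/- For every t ≥ 0 with t ≠ |ζᵢ| for all i, one has p(t) ∈ ∂J(u(t)) and u is differentiable at t with u'(t) = -p(t); moreover u(0) = f. Hence the componentwise soft-thresholding function u(t) = Vᵀs(t), sᵢ(t) = sign(ζᵢ)·max(|ζᵢ| - t, 0), solves the gradient flow ∂ₜu(t) ∈ -∂J(u(t)), u(0) = f, away from the finitely many times {|ζᵢ|}. -/
open Matrix

/-- `p` is a subgradient of `J` at `u` in `ℝⁿ`: `J v ≥ J u + ⟨p, v - u⟩` for all `v`. -/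
def IsSubgradientAt {n : ℕ} (J : (Fin n → ℝ) → ℝ) (u p : Fin n → ℝ) : Prop :=
  ∀ v : Fin n → ℝ, J v ≥ J u + p ⬝ᵥ (v - u)

lemma sign_mul_abs' (x : ℝ) : Real.sign x * |x| = x := by
  rcases lt_trichotomy x 0 with h | h | h
  · rw [Real.sign_of_neg h, abs_of_neg h]; ring
  · simp [h]
  · rw [Real.sign_of_pos h, abs_of_pos h, one_mul]

lemma abs_sign_le_one (x : ℝ) : |Real.sign x| ≤ 1 := by
  rcases lt_trichotomy x 0 with h | h | h <;>
    simp [Real.sign_of_neg, Real.sign_of_pos, h]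

lemma sign_sq (x : ℝ) (hx : x ≠ 0) : Real.sign x * Real.sign x = 1 := by
  rcases lt_or_gt_of_ne hx with h | h <;>
    simp [Real.sign_of_neg, Real.sign_of_pos, h]

lemma abs_sign_eq_one (x : ℝ) (hx : x ≠ 0) : |Real.sign x| = 1 := by
  rcases lt_or_gt_of_ne hx with h | h <;>
    simp [Real.sign_of_neg, Real.sign_of_pos, h]

lemma comp_ineq (a t y : ℝ) (ht : 0 ≤ t) (hne : t ≠ |a|) :
    |y| ≥ |Real.sign a * max (|a| - t) 0| +
      (if t < |a| then Real.sign a else 0) * (y - Real.sign a * max (|a| - t) 0) := by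
  rcases hne.lt_or_gt with h | h
  · have ha : a ≠ 0 := by
      intro h0; rw [h0] at h; simp at h; linarith
    have hs : Real.sign a * Real.sign a = 1 := sign_sq a ha
    have hmax : max (|a| - t) 0 = |a| - t := max_eq_left (by linarith)
    have habs : |Real.sign a * (|a| - t)| = |a| - t := by
      rw [abs_mul, abs_sign_eq_one a ha, one_mul, abs_of_pos (by linarith)]
    have hy : Real.sign a * y ≤ |y| :=
      calc Real.sign a * y ≤ |Real.sign a * y| := le_abs_self _
        _ = |Real.sign a| * |y| := abs_mul _ _
        _ ≤ 1 * |y| := by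
              have := abs_nonneg y
              exact mul_le_mul_of_nonneg_right (abs_sign_le_one a) this
        _ = |y| := one_mul _
    rw [if_pos h, hmax, habs]
    nlinarith [hs, hy]
  · have hmax : max (|a| - t) 0 = 0 := max_eq_right (by linarith)
    rw [if_neg (not_lt.2 h.le), hmax]
    simp [abs_nonneg]

lemma softThresh_hasDerivAt (a t : ℝ) (hne : t ≠ |a|) :
    HasDerivAt (fun t' => Real.sign a * max (|a| - t') 0)
      (-(if t < |a| then Real.sign a else 0)) t := by
  rcases hne.lt_or_gt with h | h
  · have h1 : HasDerivAt (fun t' : ℝ => Real.sign a * (|a| - t')) (-Real.sign a) t := by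
      have := ((hasDerivAt_id t).const_sub (|a|)).const_mul (Real.sign a)
      simpa using this
    rw [if_pos h]
    refine h1.congr_of_eventuallyEq ?_
    filter_upwards [eventually_lt_nhds h] with x hx
    rw [max_eq_left (by linarith)]
  · rw [if_neg (not_lt.2 h.le)]
    have h1 : HasDerivAt (fun _ : ℝ => (0 : ℝ)) 0 t := hasDerivAt_const t 0
    have h2 : HasDerivAt (fun t' => Real.sign a * max (|a| - t') 0) 0 t := by
      refine h1.congr_of_eventuallyEq ?_
      filter_upwards [eventually_gt_nhds h] with x hx
      rw [max_eq_right (by linarith), mul_zero]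
    simpa using h2

/-- For `J(u) = ‖Vu‖₁` with `V` orthogonal, the componentwise soft-thresholding
function `u(t) = Vᵀ s(t)`, `sᵢ(t) = sign(ζᵢ)·max(|ζᵢ| - t, 0)`, `ζ = Vf`, solves the
gradient flow `∂ₜu(t) ∈ -∂J(u(t))`, `u(0) = f`, away from the times `{|ζᵢ|}`,
with subgradient `p(t) = Vᵀ q(t)`, `qᵢ(t) = sign(ζᵢ)` if `|ζᵢ| > t`, `0` otherwise. -/
theorem softThresholding_solves_gradientFlow
    {n : ℕ} (V : Matrix (Fin n) (Fin n) ℝ) (hV : Vᵀ * V = 1)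
    (J : (Fin n → ℝ) → ℝ) (hJ : ∀ w, J w = ∑ i, |V.mulVec w i|)
    (f ζ : Fin n → ℝ) (hζ : ζ = V.mulVec f)
    (u p : ℝ → Fin n → ℝ)
    (hu : ∀ t : ℝ, u t = Vᵀ.mulVec (fun i => Real.sign (ζ i) * max (|ζ i| - t) 0))
    (hp : ∀ t : ℝ, p t = Vᵀ.mulVec (fun i => if t < |ζ i| then Real.sign (ζ i) else 0)) :
    u 0 = f ∧
      ∀ t : ℝ, 0 ≤ t → (∀ i, t ≠ |ζ i|) →
        IsSubgradientAt J (u t) (p t) ∧ HasDerivAt u (-(p t)) t := by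
  have hVVt : V * Vᵀ = 1 := mul_eq_one_comm.mp hV
  have hVu : ∀ t, V.mulVec (u t) = fun i => Real.sign (ζ i) * max (|ζ i| - t) 0 := by
    intro t
    rw [hu t, Matrix.mulVec_mulVec, hVVt, Matrix.one_mulVec]
  constructor
  · rw [hu 0]
    have : (fun i => Real.sign (ζ i) * max (|ζ i| - 0) 0) = ζ := by
      funext i
      rw [sub_zero, max_eq_left (abs_nonneg _), sign_mul_abs']
    rw [this, hζ, Matrix.mulVec_mulVec, hV, Matrix.one_mulVec]
  · intro t ht hti
    constructor
    · intro v
      have hdot : p t ⬝ᵥ (v - u t) =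
          (fun i => if t < |ζ i| then Real.sign (ζ i) else 0) ⬝ᵥ V.mulVec (v - u t) := by
        rw [hp t, Matrix.mulVec_transpose, ← Matrix.dotProduct_mulVec]
      rw [hJ v, hJ (u t), hdot, Matrix.mulVec_sub, hVu t]
      have key : ∀ i, |V.mulVec v i| ≥
          |Real.sign (ζ i) * max (|ζ i| - t) 0| +
            (if t < |ζ i| then Real.sign (ζ i) else 0) *
              (V.mulVec v i - Real.sign (ζ i) * max (|ζ i| - t) 0) :=
        fun i => comp_ineq (ζ i) t (V.mulVec v i) ht (hti i)
      calc ∑ i, |V.mulVec v i|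
          ≥ ∑ i, (|Real.sign (ζ i) * max (|ζ i| - t) 0| +
              (if t < |ζ i| then Real.sign (ζ i) else 0) *
                (V.mulVec v i - Real.sign (ζ i) * max (|ζ i| - t) 0)) :=
            Finset.sum_le_sum (fun i _ => key i)
        _ = ∑ i, |Real.sign (ζ i) * max (|ζ i| - t) 0| +
              (fun i => if t < |ζ i| then Real.sign (ζ i) else 0) ⬝ᵥ
                (V.mulVec v - fun i => Real.sign (ζ i) * max (|ζ i| - t) 0) := by
            rw [Finset.sum_add_distrib]
            congr 1
    · have hueq : u = fun t' => Vᵀ.mulVec (fun i => Real.sign (ζ i) * max (|ζ i| - t') 0) :=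
        funext hu
      rw [hueq, hp t]
      rw [hasDerivAt_pi]
      intro j
      have hsum := HasDerivAt.fun_sum (u := Finset.univ)
        (fun i (_ : i ∈ Finset.univ) => (softThresh_hasDerivAt (ζ i) t (hti i)).const_mul (Vᵀ j i))
      convert hsum using 1
      all_goals simp [Matrix.mulVec, dotProduct, mul_neg, Finset.sum_neg_distrib]
end

section
/- For every t ≥ 0, the subgradient p(t) = Vᵀq(t) arising from the gradient flow of J(u) = ‖Vu‖₁ is itself a (generalized) eigenfunction of J: p(t) ∈ ∂J(p(t)). -/
open Matrix

lemma pointwise_ineq (q w : ℝ) (hq : q = -1 ∨ q = 0 ∨ q = 1) :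
    |q| + q * (w - q) ≤ |w| := by
  rcases hq with h | h | h <;> subst h <;>
    simp <;> cases abs_cases w <;> linarith [abs_nonneg w, neg_abs_le w, le_abs_self w]

/-- For `J(u) = ‖Vu‖₁` with `V` orthogonal, the subgradient
`p(t) = Vᵀ q(t)`, `qᵢ(t) = sign(ζᵢ)` if `|ζᵢ| > t` and `0` otherwise (`ζ = Vf`),
arising from the gradient flow, is itself a (generalized) eigenfunction of `J`:
`p(t) ∈ ∂J(p(t))` for every `t ≥ 0`. -/
theorem gradientFlow_subgradient_is_eigenfunction
    {n : ℕ} (V : Matrix (Fin n) (Fin n) ℝ) (hV : Vᵀ * V = 1)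
    (J : (Fin n → ℝ) → ℝ) (hJ : ∀ w, J w = ∑ i, |V.mulVec w i|)
    (f ζ : Fin n → ℝ) (hζ : ζ = V.mulVec f)
    (p : ℝ → Fin n → ℝ)
    (hp : ∀ t : ℝ, p t = Vᵀ.mulVec (fun i => if t < |ζ i| then Real.sign (ζ i) else 0)) :
    ∀ t : ℝ, 0 ≤ t → IsSubgradientAt J (p t) (p t) := by
  intro t _ v
  set q : Fin n → ℝ := fun i => if t < |ζ i| then Real.sign (ζ i) else 0 with hq
  have hVVt : V * Vᵀ = 1 := mul_eq_one_comm.mp hV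
  have hVp : V.mulVec (p t) = q := by
    rw [hp t, Matrix.mulVec_mulVec, hVVt, Matrix.one_mulVec]
  have hdot : p t ⬝ᵥ (v - p t) = q ⬝ᵥ (V.mulVec (v - p t)) := by
    rw [hp t, Matrix.mulVec_transpose, Matrix.dotProduct_mulVec]
  rw [hJ, hJ, hVp, ge_iff_le, hdot, Matrix.mulVec_sub, hVp]
  have : q ⬝ᵥ (V.mulVec v - q) = ∑ i, q i * (V.mulVec v i - q i) := rfl
  rw [this, ← Finset.sum_add_distrib]
  apply Finset.sum_le_sum
  intro i _
  apply pointwise_ineq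
  simp only [hq]
  split_ifs
  · rcases Real.sign_apply_eq (ζ i) with h | h | h <;> simp [h]
  · simp
end
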